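/- Let V be a (G_Γ, β, γ0)-vertex algebra and M a (G_Γ, β, γ0)-left V-module as in the context. Then: (i) Y^M_{−1}(u, Y^M_{−2}(v, w)) ∈ C₂(M) for all u, v ∈ V, w ∈ M, and Y^M_{−1}(Y_{−2}(u, v), w) ∈ C₂(M) for all u, v ∈ V, w ∈ M; (ii) Y^M_{−1}(Y_{−1}(u, v), w) − Y^M_{−1}(u, Y^M_{−1}(v, w)) ∈ C₂(M) for all u, v ∈ V, w ∈ M. Consequently Y^M_{−1} induces on R(M) = M/C₂(M) the structure of a left module over the C₂-algebra R(V) = V/C₂(V) (whose product is induced by Y_{−1} and whose unit is the class of 𝟙). -/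

import Mathlib

/-- The generalized binomial coefficient `binom(a, i) = a(a-1)⋯(a-i+1)/i!`
for `a : ℤ`, `i : ℕ`; it is an integer. -/
def zbinom (a : ℤ) (i : ℕ) : ℤ :=
  if 0 ≤ a then (a.toNat.choose i : ℤ)
  else (-1 : ℤ) ^ i * ((((i : ℤ) - a - 1).toNat).choose i : ℤ)

/-- A `(G_Γ, β, γ0)`-vertex algebra in component form, *without* the
derivation axiom (which is to be derived): a `Γ`-graded `k`-vector space `V`
(internal direct sum of the subspaces `Vg γ`), bilinear products
`Y n : V → V → V` of degree `n • γ0`, and a vacuum vector `vac ∈ V_0`,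
satisfying truncation, vacuum, creation and the `β`-Jacobi identity. -/
structure PreVA (k : Type*) [Field k] (Γ : Type*) [AddCommGroup Γ] [DecidableEq Γ]
    (γ0 : Γ) (β : Γ → Γ → k)
    (V : Type*) [AddCommGroup V] [Module k V] where
  Vg : Γ → Submodule k V
  internal : DirectSum.IsInternal Vg
  Y : ℤ → V →ₗ[k] V →ₗ[k] V
  vac : V
  vac_mem : vac ∈ Vg 0
  grading : ∀ (n : ℤ) (γ1 γ2 : Γ) (u v : V), u ∈ Vg γ1 → v ∈ Vg γ2 →
      Y n u v ∈ Vg (γ1 + γ2 + n • γ0)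
  truncation : ∀ u v : V, ∃ N : ℤ, ∀ n : ℤ, N ≤ n → Y n u v = 0
  vacuum_left : ∀ v : V, Y (-1) vac v = v
  vacuum_left' : ∀ n : ℤ, n ≠ -1 → ∀ v : V, Y n vac v = 0
  creation : ∀ v : V, Y (-1) v vac = v
  creation' : ∀ n : ℤ, 0 ≤ n → ∀ v : V, Y n v vac = 0
  jacobi : ∀ (l m n : ℤ) (γ1 γ2 : Γ) (u v w : V), u ∈ Vg γ1 → v ∈ Vg γ2 →
      (∑ᶠ i : ℕ, (((-1 : k) ^ i * (zbinom l i : k)) •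
          Y (m + l - (i : ℤ)) u (Y (n + (i : ℤ)) v w)))
        - ((-1 : k) ^ l * β γ1 γ2) •
            (∑ᶠ i : ℕ, (((-1 : k) ^ i * (zbinom l i : k)) •
              Y (n + l - (i : ℤ)) v (Y (m + (i : ℤ)) u w)))
        = ∑ᶠ i : ℕ, ((zbinom m i : k) •
            Y (m + n - (i : ℤ)) (Y (l + (i : ℤ)) u v) w)


/-- A `(G_Γ, β, γ0)`-vertex algebra in component form: a `PreVA` together
with the derivation properties of `D(v) = Y_{-2}(v, 𝟙)`, namely
`D(Y_n(u,v)) - Y_n(u, D v) = -n • Y_{n-1}(u,v)` and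
`Y_n(D u, v) = -n • Y_{n-1}(u,v)`. -/
structure VA (k : Type*) [Field k] (Γ : Type*) [AddCommGroup Γ] [DecidableEq Γ]
    (γ0 : Γ) (β : Γ → Γ → k)
    (V : Type*) [AddCommGroup V] [Module k V]
    extends PreVA k Γ γ0 β V where
  deriv1 : ∀ (n : ℤ) (u v : V),
      Y (-2) (Y n u v) vac - Y n u (Y (-2) v vac) = (-n) • Y (n - 1) u v
  deriv2 : ∀ (n : ℤ) (u v : V),
      Y n (Y (-2) u vac) v = (-n) • Y (n - 1) u v

/-- The subspace `C₂(V) = span_k { Y_{-2}(u, v) : u, v ∈ V }`. -/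
def C2 {k Γ V : Type*} [Field k] [AddCommGroup Γ] [DecidableEq Γ]
    [AddCommGroup V] [Module k V] {γ0 : Γ} {β : Γ → Γ → k}
    (A : VA k Γ γ0 β V) : Submodule k V :=
  Submodule.span k {x : V | ∃ u v : V, A.Y (-2) u v = x}

/-- The data of a `(G_Γ, β, γ0)`-left module over a vertex algebra `A`,
*without* the derivation axiom: a `Γ`-graded `k`-vector space `M` with
bilinear action maps `YM n : V → M → M` of degree `n • γ0`, satisfying the
vacuum, truncation and `β`-Jacobi axioms. -/
structure PreVMod {k Γ V : Type*} [Field k] [AddCommGroup Γ] [DecidableEq Γ]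
    [AddCommGroup V] [Module k V] {γ0 : Γ} {β : Γ → Γ → k}
    (A : VA k Γ γ0 β V)
    (M : Type*) [AddCommGroup M] [Module k M] where
  Mg : Γ → Submodule k M
  internal : DirectSum.IsInternal Mg
  YM : ℤ → V →ₗ[k] M →ₗ[k] M
  grading : ∀ (n : ℤ) (γ δ : Γ) (v : V) (w : M), v ∈ A.Vg γ → w ∈ Mg δ →
      YM n v w ∈ Mg (γ + δ + n • γ0)
  vacuum : ∀ w : M, YM (-1) A.vac w = w
  vacuum' : ∀ n : ℤ, n ≠ -1 → ∀ w : M, YM n A.vac w = 0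
  truncation : ∀ (v : V) (w : M), ∃ N : ℤ, ∀ n : ℤ, N ≤ n → YM n v w = 0
  jacobi : ∀ (l m n : ℤ) (γ1 γ2 : Γ) (u v : V) (w : M),
      u ∈ A.Vg γ1 → v ∈ A.Vg γ2 →
      (∑ᶠ i : ℕ, (((-1 : k) ^ i * (zbinom l i : k)) •
          YM (m + l - (i : ℤ)) u (YM (n + (i : ℤ)) v w)))
        - ((-1 : k) ^ l * β γ1 γ2) •
            (∑ᶠ i : ℕ, (((-1 : k) ^ i * (zbinom l i : k)) •
              YM (n + l - (i : ℤ)) v (YM (m + (i : ℤ)) u w)))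
        = ∑ᶠ i : ℕ, ((zbinom m i : k) •
            YM (m + n - (i : ℤ)) (A.Y (l + (i : ℤ)) u v) w)

/-- A `(G_Γ, β, γ0)`-left module over the vertex algebra `A`: a `PreVMod`
together with the derivation axioms: there is a `k`-linear `D^M : M → M` with
`D^M(Y^M_n(v,w)) - Y^M_n(v, D^M w) = -n • Y^M_{n-1}(v,w)` and
`Y^M_n(D v, w) = -n • Y^M_{n-1}(v,w)` where `D(v) = Y_{-2}(v, 𝟙)`. -/
structure VMod {k Γ V : Type*} [Field k] [AddCommGroup Γ] [DecidableEq Γ]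
    [AddCommGroup V] [Module k V] {γ0 : Γ} {β : Γ → Γ → k}
    (A : VA k Γ γ0 β V)
    (M : Type*) [AddCommGroup M] [Module k M]
    extends PreVMod A M where
  DM : M →ₗ[k] M
  derivM1 : ∀ (n : ℤ) (v : V) (w : M),
      DM (YM n v w) - YM n v (DM w) = (-n) • YM (n - 1) v w
  derivM2 : ∀ (n : ℤ) (v : V) (w : M),
      YM n (A.Y (-2) v A.vac) w = (-n) • YM (n - 1) v w

/-- The subspace `C₂(M) = span_k { Y^M_{-2}(v, w) : v ∈ V, w ∈ M }`. -/
def C2M {k Γ V : Type*} [Field k] [AddCommGroup Γ] [DecidableEq Γ]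
    [AddCommGroup V] [Module k V] {γ0 : Γ} {β : Γ → Γ → k}
    {A : VA k Γ γ0 β V} {M : Type*} [AddCommGroup M] [Module k M]
    (B : VMod A M) : Submodule k M :=
  Submodule.span k {x : M | ∃ (v : V) (w : M), B.YM (-2) v w = x}

section Aux

lemma aux_finsum_mem {k M : Type*} [Field k] [AddCommGroup M] [Module k M]
    (p : Submodule k M) (f : ℕ → M) (h : ∀ i, f i ∈ p) : (∑ᶠ i, f i) ∈ p := by
  by_cases hf : (Function.support f).Finite
  · rw [finsum_eq_sum f hf]
    exact Submodule.sum_mem _ fun i _ => h i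
  · rw [finsum_of_infinite_support hf]
    exact p.zero_mem

lemma aux_finsum_sub {k M : Type*} [Field k] [AddCommGroup M] [Module k M]
    (p : Submodule k M) (f : ℕ → M) (hf : (Function.support f).Finite)
    (h : ∀ i, i ≠ 0 → f i ∈ p) : (∑ᶠ i, f i) - f 0 ∈ p := by
  classical
  have hsub : Function.support f ⊆ ↑(insert 0 hf.toFinset) := by
    intro x hx
    simp [Set.Finite.mem_toFinset, hx]
  rw [finsum_eq_sum_of_support_subset f hsub]
  rw [← Finset.add_sum_erase _ f (Finset.mem_insert_self 0 _)]
  have : ∀ x ∈ (insert 0 hf.toFinset).erase 0, f x ∈ p := by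
    intro x hx
    exact h x (Finset.ne_of_mem_erase hx)
  simpa using Submodule.sum_mem _ this

lemma zbinom_zero_ne (i : ℕ) (hi : i ≠ 0) : zbinom 0 i = 0 := by
  simp [zbinom, Nat.choose_eq_zero_of_lt (Nat.pos_of_ne_zero hi)]

lemma zbinom_zero_zero : zbinom 0 0 = 1 := by simp [zbinom]

lemma zbinom_neg_one (i : ℕ) : zbinom (-1) i = (-1) ^ i := by
  simp [zbinom]

end Aux

section Key

variable {k Γ V M : Type*} [Field k] [CharZero k] [AddCommGroup Γ]
    [DecidableEq Γ] [AddCommGroup V] [Module k V] [AddCommGroup M] [Module k M]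
    {γ0 : Γ} {β : Γ → Γ → k} {A : VA k Γ γ0 β V} (B : VMod A M)

lemma low_mem : ∀ n : ℤ, n ≤ -2 → ∀ (v : V) (w : M), B.YM n v w ∈ C2M B := by
  have key : ∀ j : ℕ, ∀ (v : V) (w : M), B.YM (-2 - j) v w ∈ C2M B := by
    intro j
    induction j with
    | zero =>
      intro v w
      exact Submodule.subset_span ⟨v, w, by norm_num⟩
    | succ j ih =>
      intro v w
      have h := B.derivM2 (-2 - (j : ℤ)) v w
      have hidx : (-2 - ((j : ℤ) + 1)) = -2 - (j : ℤ) - 1 := by ring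
      have hc : ((2 + (j : ℤ) : ℤ) : k) ≠ 0 := by
        have : (2 + (j : ℤ)) ≠ 0 := by omega
        exact Int.cast_ne_zero.mpr this
      have h2 : B.YM (-2 - (j : ℤ)) (A.Y (-2) v A.vac) w
          = ((2 + (j : ℤ) : ℤ) : k) • B.YM (-2 - (j : ℤ) - 1) v w := by
        rw [h, Int.cast_smul_eq_zsmul]
        congr 1
        ring
      have h3 : B.YM (-2 - (j : ℤ) - 1) v w
          = (((2 + (j : ℤ) : ℤ) : k))⁻¹ • B.YM (-2 - (j : ℤ)) (A.Y (-2) v A.vac) w := by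
        rw [h2, smul_smul, inv_mul_cancel₀ hc, one_smul]
      have : ((j + 1 : ℕ) : ℤ) = (j : ℤ) + 1 := by push_cast; ring
      rw [this, hidx, h3]
      exact Submodule.smul_mem _ _ (ih (A.Y (-2) v A.vac) w)
  intro n hn v w
  obtain ⟨j, hj⟩ : ∃ j : ℕ, n = -2 - j := ⟨(-2 - n).toNat, by omega⟩
  rw [hj]
  exact key j v w

end Key

section Key2

variable {k Γ V M : Type*} [Field k] [CharZero k] [AddCommGroup Γ]
    [DecidableEq Γ] [AddCommGroup V] [Module k V] [AddCommGroup M] [Module k M]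
    {γ0 : Γ} {β : Γ → Γ → k} {A : VA k Γ γ0 β V} (B : VMod A M)

lemma key1_h (γ1 γ2 : Γ) (u v : V) (w : M) (hu : u ∈ A.Vg γ1) (hv : v ∈ A.Vg γ2) :
    B.YM (-1) u (B.YM (-2) v w) ∈ C2M B := by
  have J := B.jacobi 0 (-1) (-2) γ1 γ2 u v w hu hv
  have e1 : (∑ᶠ (i : ℕ), ((-1 : k) ^ i * (zbinom 0 i : k)) •
        B.YM (-1 + 0 - (i : ℤ)) u (B.YM (-2 + (i : ℤ)) v w))
      = B.YM (-1) u (B.YM (-2) v w) := by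
    rw [finsum_eq_single _ 0 (fun i hi => by simp [zbinom_zero_ne i hi])]
    norm_num [zbinom_zero_zero]
  have hS2 : (∑ᶠ (i : ℕ), ((-1 : k) ^ i * (zbinom 0 i : k)) •
        B.YM (-2 + 0 - (i : ℤ)) v (B.YM (-1 + (i : ℤ)) u w)) ∈ C2M B :=
    aux_finsum_mem _ _ fun i => Submodule.smul_mem _ _ (low_mem B _ (by omega) _ _)
  have hR : (∑ᶠ (i : ℕ), ((zbinom (-1) i : k)) •
        B.YM (-1 + -2 - (i : ℤ)) (A.Y (0 + (i : ℤ)) u v) w) ∈ C2M B :=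
    aux_finsum_mem _ _ fun i => Submodule.smul_mem _ _ (low_mem B _ (by omega) _ _)
  rw [← e1, eq_add_of_sub_eq J]
  exact Submodule.add_mem _ hR (Submodule.smul_mem _ _ hS2)

lemma key2_h {k Γ V M : Type*} [Field k] [CharZero k] [AddCommGroup Γ]
    [DecidableEq Γ] [AddCommGroup V] [Module k V] [AddCommGroup M] [Module k M]
    {γ0 : Γ} {β : Γ → Γ → k} {A : VA k Γ γ0 β V} (B : VMod A M)
    (γ1 γ2 : Γ) (u v : V) (w : M) (hu : u ∈ A.Vg γ1) (hv : v ∈ A.Vg γ2) :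
    B.YM (-1) (A.Y (-2) u v) w ∈ C2M B := by
  have J := B.jacobi (-2) 0 (-1) γ1 γ2 u v w hu hv
  have e : (∑ᶠ (i : ℕ), ((zbinom 0 i : k)) •
        B.YM (0 + -1 - (i : ℤ)) (A.Y (-2 + (i : ℤ)) u v) w)
      = B.YM (-1) (A.Y (-2) u v) w := by
    rw [finsum_eq_single _ 0 (fun i hi => by simp [zbinom_zero_ne i hi])]
    norm_num [zbinom_zero_zero]
  have hS1 : (∑ᶠ (i : ℕ), ((-1 : k) ^ i * (zbinom (-2) i : k)) •
        B.YM (0 + -2 - (i : ℤ)) u (B.YM (-1 + (i : ℤ)) v w)) ∈ C2M B :=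
    aux_finsum_mem _ _ fun i => Submodule.smul_mem _ _ (low_mem B _ (by omega) _ _)
  have hS2 : (∑ᶠ (i : ℕ), ((-1 : k) ^ i * (zbinom (-2) i : k)) •
        B.YM (-1 + -2 - (i : ℤ)) v (B.YM (0 + (i : ℤ)) u w)) ∈ C2M B :=
    aux_finsum_mem _ _ fun i => Submodule.smul_mem _ _ (low_mem B _ (by omega) _ _)
  rw [← e, ← J]
  exact Submodule.sub_mem _ hS1 (Submodule.smul_mem _ _ hS2)

lemma key3_h {k Γ V M : Type*} [Field k] [CharZero k] [AddCommGroup Γ]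
    [DecidableEq Γ] [AddCommGroup V] [Module k V] [AddCommGroup M] [Module k M]
    {γ0 : Γ} {β : Γ → Γ → k} {A : VA k Γ γ0 β V} (B : VMod A M)
    (γ1 γ2 : Γ) (u v : V) (w : M) (hu : u ∈ A.Vg γ1) (hv : v ∈ A.Vg γ2) :
    B.YM (-1) (A.Y (-1) u v) w - B.YM (-1) u (B.YM (-1) v w) ∈ C2M B := by
  have J := B.jacobi (-1) 0 (-1) γ1 γ2 u v w hu hv
  set f : ℕ → M := fun i => ((-1 : k) ^ i * (zbinom (-1) i : k)) •
      B.YM (0 + -1 - (i : ℤ)) u (B.YM (-1 + (i : ℤ)) v w) with hf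
  have e : (∑ᶠ (i : ℕ), ((zbinom 0 i : k)) •
        B.YM (0 + -1 - (i : ℤ)) (A.Y (-1 + (i : ℤ)) u v) w)
      = B.YM (-1) (A.Y (-1) u v) w := by
    rw [finsum_eq_single _ 0 (fun i hi => by simp [zbinom_zero_ne i hi])]
    norm_num [zbinom_zero_zero]
  have e0 : f 0 = B.YM (-1) u (B.YM (-1) v w) := by
    rw [hf]
    norm_num [zbinom_neg_one]
  have hfin : (Function.support f).Finite := by
    obtain ⟨N, hN⟩ := B.truncation v w
    apply Set.Finite.subset (Set.finite_Iio (N + 1).toNat)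
    intro i hi
    simp only [Set.mem_Iio]
    by_contra hlt
    push_neg at hlt
    apply hi
    have : B.YM (-1 + (i : ℤ)) v w = 0 := hN _ (by omega)
    simp [hf, this]
  have hterm : ∀ i : ℕ, i ≠ 0 → f i ∈ C2M B := by
    intro i hi
    exact Submodule.smul_mem _ _ (low_mem B _ (by omega) _ _)
  have hS2 : (∑ᶠ (i : ℕ), ((-1 : k) ^ i * (zbinom (-1) i : k)) •
        B.YM (-1 + -1 - (i : ℤ)) v (B.YM (0 + (i : ℤ)) u w)) ∈ C2M B :=
    aux_finsum_mem _ _ fun i => Submodule.smul_mem _ _ (low_mem B _ (by omega) _ _)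
  rw [← e, ← e0, ← J]
  have harr : (∑ᶠ i, f i) - ((-1 : k) ^ (-1 : ℤ) * β γ1 γ2) •
        (∑ᶠ (i : ℕ), ((-1 : k) ^ i * (zbinom (-1) i : k)) •
          B.YM (-1 + -1 - (i : ℤ)) v (B.YM (0 + (i : ℤ)) u w)) - f 0
      = ((∑ᶠ i, f i) - f 0) - ((-1 : k) ^ (-1 : ℤ) * β γ1 γ2) •
        (∑ᶠ (i : ℕ), ((-1 : k) ^ i * (zbinom (-1) i : k)) •
          B.YM (-1 + -1 - (i : ℤ)) v (B.YM (0 + (i : ℤ)) u w)) := by abel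
  rw [harr]
  exact Submodule.sub_mem _ (aux_finsum_sub _ f hfin hterm) (Submodule.smul_mem _ _ hS2)

lemma bilin_induct {k Γ V : Type*} [Field k] [CharZero k] [AddCommGroup Γ]
    [DecidableEq Γ] [AddCommGroup V] [Module k V]
    {γ0 : Γ} {β : Γ → Γ → k} (A : VA k Γ γ0 β V)
    (p : V → V → Prop)
    (h0l : ∀ v, p 0 v) (h0r : ∀ u, p u 0)
    (haddl : ∀ u1 u2 v, p u1 v → p u2 v → p (u1 + u2) v)
    (haddr : ∀ u v1 v2, p u v1 → p u v2 → p u (v1 + v2))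
    (hh : ∀ (γ1 γ2 : Γ) (u v : V), u ∈ A.Vg γ1 → v ∈ A.Vg γ2 → p u v) :
    ∀ u v, p u v := by
  have htop : ∀ x : V, x ∈ ⨆ γ, A.Vg γ := by
    rw [A.internal.submodule_iSup_eq_top]
    exact fun x => trivial
  intro u v
  refine Submodule.iSup_induction (motive := fun u => p u v) _ (htop u)
    (fun γ1 x hx => ?_) (h0l v) (fun a b ha hb => haddl a b v ha hb)
  refine Submodule.iSup_induction (motive := fun v => p x v) _ (htop v)
    (fun γ2 y hy => hh γ1 γ2 x y hx hy) (h0r x) (fun a b ha hb => haddr x a b ha hb)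

variable {k Γ V M : Type*} [Field k] [CharZero k] [AddCommGroup Γ]
    [DecidableEq Γ] [AddCommGroup V] [Module k V] [AddCommGroup M] [Module k M]
    {γ0 : Γ} {β : Γ → Γ → k} {A : VA k Γ γ0 β V} (B : VMod A M)

lemma key1 (u v : V) (w : M) : B.YM (-1) u (B.YM (-2) v w) ∈ C2M B := by
  revert w
  refine bilin_induct A (fun u v => ∀ w, B.YM (-1) u (B.YM (-2) v w) ∈ C2M B)
    ?_ ?_ ?_ ?_ (fun γ1 γ2 u v hu hv w => key1_h B γ1 γ2 u v w hu hv) u v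
  · intro v w; simp
  · intro u w; simp
  · intro u1 u2 v h1 h2 w
    rw [map_add, LinearMap.add_apply]
    exact Submodule.add_mem _ (h1 w) (h2 w)
  · intro u v1 v2 h1 h2 w
    rw [map_add, LinearMap.add_apply, map_add]
    exact Submodule.add_mem _ (h1 w) (h2 w)

lemma key2 (u v : V) (w : M) : B.YM (-1) (A.Y (-2) u v) w ∈ C2M B := by
  revert w
  refine bilin_induct A (fun u v => ∀ w, B.YM (-1) (A.Y (-2) u v) w ∈ C2M B)
    ?_ ?_ ?_ ?_ (fun γ1 γ2 u v hu hv w => key2_h B γ1 γ2 u v w hu hv) u v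
  · intro v w; simp
  · intro u w; simp
  · intro u1 u2 v h1 h2 w
    rw [map_add, LinearMap.add_apply, map_add, LinearMap.add_apply]
    exact Submodule.add_mem _ (h1 w) (h2 w)
  · intro u v1 v2 h1 h2 w
    rw [map_add, map_add, LinearMap.add_apply]
    exact Submodule.add_mem _ (h1 w) (h2 w)

lemma key3 (u v : V) (w : M) :
    B.YM (-1) (A.Y (-1) u v) w - B.YM (-1) u (B.YM (-1) v w) ∈ C2M B := by
  revert w
  refine bilin_induct A
    (fun u v => ∀ w, B.YM (-1) (A.Y (-1) u v) w - B.YM (-1) u (B.YM (-1) v w) ∈ C2M B)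
    ?_ ?_ ?_ ?_ (fun γ1 γ2 u v hu hv w => key3_h B γ1 γ2 u v w hu hv) u v
  · intro v w; simp
  · intro u w; simp
  · intro u1 u2 v h1 h2 w
    have : B.YM (-1) (A.Y (-1) (u1 + u2) v) w - B.YM (-1) (u1 + u2) (B.YM (-1) v w)
        = (B.YM (-1) (A.Y (-1) u1 v) w - B.YM (-1) u1 (B.YM (-1) v w))
          + (B.YM (-1) (A.Y (-1) u2 v) w - B.YM (-1) u2 (B.YM (-1) v w)) := by
      simp only [map_add, LinearMap.add_apply]
      abel
    rw [this]
    exact Submodule.add_mem _ (h1 w) (h2 w)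
  · intro u v1 v2 h1 h2 w
    have : B.YM (-1) (A.Y (-1) u (v1 + v2)) w - B.YM (-1) u (B.YM (-1) (v1 + v2) w)
        = (B.YM (-1) (A.Y (-1) u v1) w - B.YM (-1) u (B.YM (-1) v1 w))
          + (B.YM (-1) (A.Y (-1) u v2) w - B.YM (-1) u (B.YM (-1) v2 w)) := by
      simp only [map_add, LinearMap.add_apply]
      abel
    rw [this]
    exact Submodule.add_mem _ (h1 w) (h2 w)

/-- `V` as a left module over itself. -/
noncomputable def selfMod {k Γ V : Type*} [Field k] [CharZero k] [AddCommGroup Γ]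
    [DecidableEq Γ] [AddCommGroup V] [Module k V]
    {γ0 : Γ} {β : Γ → Γ → k} (A : VA k Γ γ0 β V) : VMod A V where
  Mg := A.Vg
  internal := A.internal
  YM := A.Y
  grading := A.grading
  vacuum := A.vacuum_left
  vacuum' := A.vacuum_left'
  truncation := A.truncation
  jacobi := A.jacobi
  DM := (A.Y (-2)).flip A.vac
  derivM1 := A.deriv1
  derivM2 := A.deriv2

lemma C2M_selfMod {k Γ V : Type*} [Field k] [CharZero k] [AddCommGroup Γ]
    [DecidableEq Γ] [AddCommGroup V] [Module k V]
    {γ0 : Γ} {β : Γ → Γ → k} (A : VA k Γ γ0 β V) : C2M (selfMod A) = C2 A := rfl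

noncomputable def lift1 : V →ₗ[k] ((M ⧸ C2M B) →ₗ[k] (M ⧸ C2M B)) where
  toFun v := Submodule.liftQ (C2M B) (((C2M B).mkQ).comp (B.YM (-1) v)) (by
    rw [C2M, Submodule.span_le]
    rintro x ⟨v', w', rfl⟩
    simp only [SetLike.mem_coe, LinearMap.mem_ker, LinearMap.comp_apply,
      Submodule.mkQ_apply, Submodule.Quotient.mk_eq_zero]
    exact key1 B v v' w')
  map_add' a b := by
    apply LinearMap.ext
    intro x
    obtain ⟨m, rfl⟩ := Submodule.Quotient.mk_surjective _ x
    simp [Submodule.liftQ_apply, map_add]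
  map_smul' c a := by
    apply LinearMap.ext
    intro x
    obtain ⟨m, rfl⟩ := Submodule.Quotient.mk_surjective _ x
    simp [Submodule.liftQ_apply, map_smul]

lemma lift1_apply (v : V) (w : M) :
    lift1 B v (Submodule.Quotient.mk w) = Submodule.Quotient.mk (B.YM (-1) v w) := rfl

noncomputable def lift2 : (V ⧸ C2 A) →ₗ[k] ((M ⧸ C2M B) →ₗ[k] (M ⧸ C2M B)) :=
  Submodule.liftQ (C2 A) (lift1 B) (by
    rw [C2, Submodule.span_le]
    rintro x ⟨u, v, rfl⟩
    simp only [SetLike.mem_coe, LinearMap.mem_ker]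
    apply LinearMap.ext
    intro y
    obtain ⟨w, rfl⟩ := Submodule.Quotient.mk_surjective _ y
    rw [lift1_apply]
    simpa [Submodule.Quotient.mk_eq_zero] using key2 B u v w)

lemma lift2_apply (v : V) (w : M) :
    lift2 B (Submodule.Quotient.mk v) (Submodule.Quotient.mk w)
      = Submodule.Quotient.mk (B.YM (-1) v w) := rfl

end Key2

/-- for a `(G_Γ, β, γ0)`-vertex algebra `V` and a
`(G_Γ, β, γ0)`-left `V`-module `M`:
(i) `Y^M_{-1}(u, Y^M_{-2}(v,w)) ∈ C₂(M)` and
`Y^M_{-1}(Y_{-2}(u,v), w) ∈ C₂(M)`;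
(ii) `Y^M_{-1}(Y_{-1}(u,v), w) - Y^M_{-1}(u, Y^M_{-1}(v,w)) ∈ C₂(M)`.
Consequently `Y^M_{-1}` induces on `R(M) = M/C₂(M)` a left module structure
over the `C₂`-algebra `R(V) = V/C₂(V)` (product induced by `Y_{-1}`, unit the
class of `𝟙`). -/
theorem statement14 {k Γ V M : Type*} [Field k] [CharZero k] [AddCommGroup Γ]
    [DecidableEq Γ] [AddCommGroup V] [Module k V] [AddCommGroup M] [Module k M]
    (γ0 : Γ) (β : Γ → Γ → k) (A : VA k Γ γ0 β V) (B : VMod A M) :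
    (∀ (u v : V) (w : M), B.YM (-1) u (B.YM (-2) v w) ∈ C2M B) ∧
    (∀ (u v : V) (w : M), B.YM (-1) (A.Y (-2) u v) w ∈ C2M B) ∧
    (∀ (u v : V) (w : M),
      B.YM (-1) (A.Y (-1) u v) w - B.YM (-1) u (B.YM (-1) v w) ∈ C2M B) ∧
    (∃ (π : (V ⧸ C2 A) → (V ⧸ C2 A) → (V ⧸ C2 A))
       (πM : (V ⧸ C2 A) → (M ⧸ C2M B) → (M ⧸ C2M B)),
      (∀ u v : V, π (Submodule.Quotient.mk u) (Submodule.Quotient.mk v)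
          = Submodule.Quotient.mk (A.Y (-1) u v)) ∧
      (∀ (v : V) (w : M),
        πM (Submodule.Quotient.mk v) (Submodule.Quotient.mk w)
          = Submodule.Quotient.mk (B.YM (-1) v w)) ∧
      (∀ (a b : V ⧸ C2 A) (m : M ⧸ C2M B),
        πM (π a b) m = πM a (πM b m)) ∧
      (∀ m : M ⧸ C2M B, πM (Submodule.Quotient.mk A.vac) m = m)) := by
  refine ⟨key1 B, key2 B, key3 B, ?_⟩
  refine ⟨fun a b => lift2 (selfMod A) a b, fun a m => lift2 B a m, ?_, ?_, ?_, ?_⟩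
  · intro u v
    rfl
  · intro v w
    rfl
  · intro a b m
    obtain ⟨u, rfl⟩ := Submodule.Quotient.mk_surjective _ a
    obtain ⟨v, rfl⟩ := Submodule.Quotient.mk_surjective _ b
    obtain ⟨w, rfl⟩ := Submodule.Quotient.mk_surjective _ m
    show Submodule.Quotient.mk (B.YM (-1) (A.Y (-1) u v) w)
        = Submodule.Quotient.mk (B.YM (-1) u (B.YM (-1) v w))
    rw [Submodule.Quotient.eq]
    exact key3 B u v w
  · intro m
    obtain ⟨w, rfl⟩ := Submodule.Quotient.mk_surjective _ m
    show Submodule.Quotient.mk (B.YM (-1) A.vac w) = Submodule.Quotient.mk w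
    rw [B.vacuum]
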